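/- If P is an upwards-closed property of vertex subsets of a graph G (every superset of a set with P also has P) and some subset of V(G) has property P, then the P-compelling chromatic number of G is at most m_P(G) + χ(G). -/
import Mathlib


open SimpleGraph

/-- A proper coloring of `G` with `k` colors. -/
def ProperColoring {V : Type*} {k : ℕ} (G : SimpleGraph V) (c : V → Fin k) : Prop :=
  ∀ ⦃u v : V⦄, G.Adj u v → c u ≠ c v

/-- `f` selects a rainbow committee of the coloring `c`: one vertex of each color. -/
def IsRainbow {V : Type*} {k : ℕ} (c : V → Fin k) (f : Fin k → V) : Prop :=
  ∀ i : Fin k, c (f i) = i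

/-- The coloring `c` compels property `P`: every rainbow committee has property `P`. -/
def Compels {V : Type*} {k : ℕ} (c : V → Fin k) (P : Set V → Prop) : Prop :=
  ∀ f : Fin k → V, IsRainbow c f → P (Set.range f)

/-- The `P`-compelling chromatic number of `G`: the least number of colors in a proper
coloring, using every color, in which every rainbow committee has property `P`. -/
noncomputable def compellingChromNum {V : Type*} (G : SimpleGraph V) (P : Set V → Prop) : ℕ :=
  sInf {k : ℕ | ∃ c : V → Fin k,
    ProperColoring G c ∧ Function.Surjective c ∧ Compels c P}

/-- If `P` is upwards-closed and some subset has `P`, then the `P`-compelling chromatic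
number is at most `m_P G + χ G`. -/
theorem compellingChromNum_le_of_upwardsClosed {V : Type*} [Fintype V] (G : SimpleGraph V)
    (P : Set V → Prop) (hup : ∀ S T : Set V, P S → S ⊆ T → P T) (hex : ∃ S : Set V, P S) :
    (compellingChromNum G P : ℕ∞) ≤
      ((sInf {n : ℕ | ∃ S : Set V, P S ∧ S.ncard = n} : ℕ) : ℕ∞) + G.chromaticNumber := by
  classical
  set m : ℕ := sInf {n : ℕ | ∃ S : Set V, P S ∧ S.ncard = n} with hm
  -- obtain a minimum-size set with property P
  have hmem : m ∈ {n : ℕ | ∃ S : Set V, P S ∧ S.ncard = n} := by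
    apply Nat.sInf_mem
    obtain ⟨S, hS⟩ := hex
    exact ⟨S.ncard, S, hS, rfl⟩
  obtain ⟨S, hPS, hScard⟩ := hmem
  -- the chromatic number as a natural number
  set n : ℕ := ENat.toNat G.chromaticNumber with hn
  have hcol : G.Colorable n := G.colorable_chromaticNumber_of_fintype
  have hχ : (n : ℕ∞) = G.chromaticNumber := by
    apply ENat.coe_toNat
    rw [chromaticNumber_ne_top_iff_exists]
    exact ⟨n, hcol⟩
  obtain ⟨C⟩ := hcol
  -- work with the finset version of S
  set s : Finset V := S.toFinset with hsdef
  have hscard : s.card = m := by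
    rw [hsdef, ← Set.ncard_eq_toFinset_card', hScard]
  have hscoe : (s : Set V) = S := by simp [hsdef]
  let eS : s ≃ Fin m := s.equivFinOfCardEq hscard
  -- colors used outside s
  set T : Finset (Fin n) := Finset.image C sᶜ with hT
  set t : ℕ := T.card with ht
  let eT : T ≃ Fin t := T.equivFin
  have htn : t ≤ n := by
    calc t = T.card := rfl
    _ ≤ Fintype.card (Fin n) := T.card_le_univ
    _ = n := Fintype.card_fin n
  -- the combined coloring
  have hmemT : ∀ v : V, v ∉ s → C v ∈ T := by
    intro v hv
    rw [hT, Finset.mem_image]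
    exact ⟨v, by simpa using hv, rfl⟩
  let c' : V → Fin m ⊕ Fin t := fun v =>
    if h : v ∈ s then Sum.inl (eS ⟨v, h⟩) else Sum.inr (eT ⟨C v, hmemT v h⟩)
  let c : V → Fin (m + t) := fun v => finSumFinEquiv (c' v)
  -- key fact: vertices of s are determined by their color
  have hcs : ∀ (v : V) (h : v ∈ s), c' v = Sum.inl (eS ⟨v, h⟩) := fun v h => dif_pos h
  have hcns : ∀ (v : V) (h : v ∉ s), c' v = Sum.inr (eT ⟨C v, hmemT v h⟩) := fun v h => dif_neg h
  have hkey : m + t ∈ {k : ℕ | ∃ c : V → Fin k,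
      ProperColoring G c ∧ Function.Surjective c ∧ Compels c P} := by
    refine ⟨c, ?_, ?_, ?_⟩
    · -- proper
      intro u v huv hcuv
      have hne : u ≠ v := huv.ne
      have h' : c' u = c' v := finSumFinEquiv.injective hcuv
      by_cases hu : u ∈ s <;> by_cases hv : v ∈ s
      · rw [hcs u hu, hcs v hv] at h'
        exact hne (Subtype.ext_iff.mp (eS.injective (Sum.inl.inj h')))
      · rw [hcs u hu, hcns v hv] at h'
        simp at h'
      · rw [hcns u hu, hcs v hv] at h'
        simp at h'
      · rw [hcns u hu, hcns v hv] at h'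
        exact C.valid huv (Subtype.ext_iff.mp (eT.injective (Sum.inr.inj h')))
    · -- surjective
      intro i
      obtain ⟨x, hx⟩ := finSumFinEquiv.surjective i
      cases x with
      | inl j =>
        refine ⟨((eS.symm j : s) : V), ?_⟩
        show finSumFinEquiv (c' _) = i
        rw [hcs _ (eS.symm j).2]
        simp [← hx]
      | inr j =>
        have hmemj : ((eT.symm j : T) : Fin n) ∈ Finset.image C sᶜ := (eT.symm j).2
        obtain ⟨v, hv, hCv⟩ := Finset.mem_image.mp hmemj
        have hv' : v ∉ s := by simpa using hv
        refine ⟨v, ?_⟩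
        show finSumFinEquiv (c' v) = i
        rw [hcns v hv',
          show (⟨C v, hmemT v hv'⟩ : {x // x ∈ T}) = eT.symm j from Subtype.ext hCv,
          Equiv.apply_symm_apply, hx]
    · -- compels
      intro f hf
      apply hup S _ hPS
      rw [← hscoe]
      intro v hv
      set i : Fin (m + t) := finSumFinEquiv (Sum.inl (eS ⟨v, hv⟩)) with hi
      have hfi : c (f i) = i := hf i
      have h' : c' (f i) = Sum.inl (eS ⟨v, hv⟩) := finSumFinEquiv.injective hfi
      by_cases hmem : f i ∈ s
      · rw [hcs (f i) hmem] at h'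
        have := eS.injective (Sum.inl.inj h')
        have : f i = v := Subtype.ext_iff.mp this
        exact ⟨i, this⟩
      · rw [hcns _ hmem] at h'
        simp at h'
  -- conclude
  have h1 : compellingChromNum G P ≤ m + t := Nat.sInf_le hkey
  have h2 : compellingChromNum G P ≤ m + n := h1.trans (by omega)
  calc (compellingChromNum G P : ℕ∞) ≤ ((m + n : ℕ) : ℕ∞) := by exact_mod_cast h2
  _ = (m : ℕ∞) + (n : ℕ∞) := by push_cast; rfl
  _ = (m : ℕ∞) + G.chromaticNumber := by rw [hχ]
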